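/- For any n, m ≥ 2 and any γ ∈ (0,1), there exists a set V = {v^1, …, v^N} of N = n^m − n additive n-bidder, m-item valuation vectors (with all singleton values in {0,1}) such that for every subset H ⊆ V there exists a λ-auction A_H whose revenue satisfies rev_{A_H}(v^i) = 0 for every v^i ∉ H and rev_{A_H}(v^i) ≥ 2 − 2γ for every v^i ∈ H. -/
import Mathlib


open Finset MeasureTheory

/-- An `n`-bidder, `m`-item allocation: pairwise disjoint bundles of items. -/
def Alloc (n m : ℕ) : Type :=
  {o : Fin n → Finset (Fin m) // ∀ i j, i ≠ j → o i ∩ o j = ∅}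

instance (n m : ℕ) : Inhabited (Alloc n m) :=
  ⟨⟨fun _ => ∅, fun _ _ _ => by simp⟩⟩

instance (n m : ℕ) : Fintype (Alloc n m) :=
  Subtype.fintype _

instance (n m : ℕ) : Nonempty (Alloc n m) := ⟨default⟩

/-- Maximum of a real-valued function over all allocations. -/
noncomputable def allocMax {n m : ℕ} (f : Alloc n m → ℝ) : ℝ :=
  Finset.univ.sup' Finset.univ_nonempty f

/-- A fixed (canonical) maximizer of a real-valued function over all allocations. -/
noncomputable def chooseMax {n m : ℕ} (f : Alloc n m → ℝ) : Alloc n m :=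
  Classical.choose (Finset.exists_max_image Finset.univ f Finset.univ_nonempty)

/-- `os` maximizes the boosted weighted social welfare. -/
def IsMaxAlloc {n m : ℕ} (w : Fin n → ℝ) (lam : Alloc n m → ℝ)
    (v : Fin n → Finset (Fin m) → ℝ) (os : Alloc n m) : Prop :=
  ∀ o : Alloc n m, (∑ j, w j * v j (o.1 j)) + lam o ≤ (∑ j, w j * v j (os.1 j)) + lam os

/-- Revenue of the AMA with weights `w`, boosts `lam`, on valuations `v`, when the
chosen (welfare-maximizing) allocation is `os`. -/
noncomputable def amaRev {n m : ℕ} (w : Fin n → ℝ) (lam : Alloc n m → ℝ)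
    (v : Fin n → Finset (Fin m) → ℝ) (os : Alloc n m) : ℝ :=
  ∑ j, (w j)⁻¹ *
    (allocMax (fun o => (∑ l ∈ Finset.univ.erase j, w l * v l (o.1 l)) + lam o)
      - ((∑ l ∈ Finset.univ.erase j, w l * v l (os.1 l)) + lam os))

/-- The boosts of the `c`-MBA. -/
def mbaLam {n m : ℕ} (c : ℝ) : Alloc n m → ℝ :=
  fun o => if ∃ i, o.1 i = Finset.univ then c else 0

/-- Revenue of the `c`-MBA (with a fixed tie-breaking rule). -/
noncomputable def mbaRev {n m : ℕ} (v : Fin n → Finset (Fin m) → ℝ) (c : ℝ) : ℝ :=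
  amaRev (fun _ => 1) (mbaLam c) v
    (chooseMax fun o => (∑ j, v j (o.1 j)) + mbaLam c o)

/-- Revenue of the MBARP with grand-bundle boost `c` and item reserve prices `r`
(with a fixed tie-breaking rule); the seller participates as bidder `0`. -/
noncomputable def mbarpRev {n m : ℕ} (v : Fin n → Finset (Fin m) → ℝ) (c : ℝ)
    (r : Fin m → ℝ) : ℝ :=
  let vx : Fin (n + 1) → Finset (Fin m) → ℝ :=
    fun i b => Fin.cases (∑ j ∈ b, r j) (fun i' => v i' b) i
  let g : Fin (n + 1) → Alloc (n + 1) m → ℝ :=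
    fun i o => (∑ l ∈ Finset.univ.erase i, vx l (o.1 l)) + mbaLam c o
  let os : Alloc (n + 1) m := chooseMax fun o => (∑ i, vx i (o.1 i)) + mbaLam c o
  ∑ i : Fin n, (allocMax (g i.succ) - g i.succ os)

/-- Empirical Rademacher complexity of a class `F` on the sample `S`. -/
noncomputable def empRad {X : Type*} (F : Set (X → ℝ)) {N : ℕ} (S : Fin N → X) : ℝ :=
  ((2 : ℝ) ^ N)⁻¹ * ∑ σ : Fin N → Bool,
    ⨆ f ∈ F, (N : ℝ)⁻¹ * ∑ i, (if σ i then (1 : ℝ) else -1) * f (S i)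

/-- Rademacher complexity: expected empirical Rademacher complexity over i.i.d. samples. -/
noncomputable def radComp {X : Type*} [MeasurableSpace X] (D : Measure X)
    (F : Set (X → ℝ)) (N : ℕ) : ℝ :=
  ∫ S, empRad F S ∂(Measure.pi fun _ : Fin N => D)

/-- Pseudo-shattering of the tuple `x` by the class `F`, with witnesses `z`. -/
def PShatters {X : Type*} (F : Set (X → ℝ)) {k : ℕ} (x : Fin k → X) : Prop :=
  ∃ z : Fin k → ℝ, ∀ T : Finset (Fin k), ∃ f ∈ F,
    (∀ i, i ∈ T → f (x i) ≤ z i) ∧ (∀ i, i ∉ T → z i < f (x i))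

/-- A valuation is additive if it is determined by its values on singletons. -/
def AdditiveVal {n m : ℕ} (v : Fin n → Finset (Fin m) → ℝ) : Prop :=
  ∀ i b, v i b = ∑ j ∈ b, v i {j}

namespace Stmt9Aux

variable {n m : ℕ}

/-- The allocation assigning each item `j` to bidder `g j`. -/
def allocOf (g : Fin m → Fin n) : Alloc n m :=
  ⟨fun i => Finset.univ.filter fun j => g j = i, fun i j hij => by
    apply Finset.eq_empty_iff_forall_notMem.2
    intro x hx
    simp only [Finset.mem_inter, Finset.mem_filter, Finset.mem_univ, true_and] at hx
    exact hij (hx.1.symm.trans hx.2)⟩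

lemma mem_allocOf (g : Fin m → Fin n) (i : Fin n) (j : Fin m) :
    j ∈ (allocOf g).1 i ↔ g j = i := by
  simp [allocOf]

lemma allocOf_injective : Function.Injective (allocOf : (Fin m → Fin n) → Alloc n m) := by
  intro f g h
  funext j
  have h1 : j ∈ (allocOf f).1 (f j) := (mem_allocOf f (f j) j).2 rfl
  rw [h] at h1
  exact ((mem_allocOf g (f j) j).1 h1).symm

/-- The additive valuation induced by `g`. -/
def valOf (g : Fin m → Fin n) : Fin n → Finset (Fin m) → ℝ :=
  fun i b => ∑ j ∈ b, if g j = i then 1 else 0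

lemma welfare_count (g : Fin m → Fin n) (s : Finset (Fin n)) (o : Alloc n m) :
    ∑ l ∈ s, valOf g l (o.1 l)
      = (((Finset.univ.filter fun j => g j ∈ s ∧ j ∈ o.1 (g j))).card : ℝ) := by
  have step1 : ∀ l, valOf g l (o.1 l) = ∑ j : Fin m, if g j = l ∧ j ∈ o.1 l then (1:ℝ) else 0 := by
    intro l
    simp only [valOf]
    rw [show o.1 l = Finset.univ.filter (fun j => j ∈ o.1 l) from by ext x; simp]
    rw [Finset.sum_filter]
    refine Finset.sum_congr rfl fun j _ => ?_
    by_cases h1 : j ∈ o.1 l <;> by_cases h2 : g j = l <;> simp [h1, h2]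
  simp only [step1]
  rw [Finset.sum_comm]
  rw [Finset.card_filter]
  push_cast
  refine Finset.sum_congr rfl fun j _ => ?_
  have step2 : ∀ l, (if g j = l ∧ j ∈ o.1 l then (1:ℝ) else 0)
      = if g j = l then (if j ∈ o.1 (g j) then (1:ℝ) else 0) else 0 := by
    intro l
    by_cases h : g j = l
    · subst h; simp
    · simp [h]
  simp only [step2]
  rw [Finset.sum_ite_eq]
  by_cases h1 : g j ∈ s <;> by_cases h2 : j ∈ o.1 (g j) <;> simp [h1, h2]

lemma welfare_le_erase (g : Fin m → Fin n) (k : Fin n) (o : Alloc n m) :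
    ∑ l ∈ Finset.univ.erase k, valOf g l (o.1 l)
      ≤ ((Finset.univ.filter fun j => g j ≠ k).card : ℝ) := by
  rw [welfare_count]
  have hsub : (Finset.univ.filter fun j => g j ∈ Finset.univ.erase k ∧ j ∈ o.1 (g j))
      ⊆ Finset.univ.filter fun j => g j ≠ k := by
    intro x hx
    simp only [Finset.mem_filter, Finset.mem_erase, Finset.mem_univ, true_and, and_true] at hx ⊢
    exact hx.1
  exact_mod_cast Finset.card_le_card hsub

lemma welfare_allocOf_erase (g : Fin m → Fin n) (k : Fin n) :
    ∑ l ∈ Finset.univ.erase k, valOf g l ((allocOf g).1 l)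
      = ((Finset.univ.filter fun j => g j ≠ k).card : ℝ) := by
  rw [welfare_count]
  have hset : (Finset.univ.filter fun j => g j ∈ Finset.univ.erase k ∧ j ∈ (allocOf g).1 (g j))
      = Finset.univ.filter fun j => g j ≠ k := by
    ext x
    simp [allocOf]
  rw [hset]

lemma welfare_allocOf_full (g : Fin m → Fin n) :
    ∑ l, valOf g l ((allocOf g).1 l) = (m : ℝ) := by
  rw [welfare_count]
  have hset : (Finset.univ.filter fun j => g j ∈ Finset.univ ∧ j ∈ (allocOf g).1 (g j))
      = Finset.univ := by
    ext x
    simp [allocOf]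
  rw [hset]
  simp

lemma rigidity (g : Fin m → Fin n) (o : Alloc n m)
    (h : (m : ℝ) - 1 < ∑ l, valOf g l (o.1 l)) : o = allocOf g := by
  rw [welfare_count] at h
  set A := Finset.univ.filter fun j => g j ∈ Finset.univ ∧ j ∈ o.1 (g j) with hA
  have hm : m ≤ A.card := by
    have h2 : (m:ℝ) < A.card + 1 := by linarith
    have h3 : m < A.card + 1 := by exact_mod_cast h2
    omega
  have hAu : A = Finset.univ := by
    apply Finset.eq_univ_of_card
    have hle := Finset.card_le_univ A
    simp only [Finset.card_univ, Fintype.card_fin] at hle ⊢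
    omega
  have hall : ∀ j, j ∈ o.1 (g j) := by
    intro j
    have hj : j ∈ A := hAu.symm ▸ Finset.mem_univ j
    exact (Finset.mem_filter.1 hj).2.2
  apply Subtype.ext
  funext i
  ext j
  simp only [allocOf, Finset.mem_filter, Finset.mem_univ, true_and]
  constructor
  · intro hj
    by_contra hne
    have hd := o.2 i (g j) fun h' => hne h'.symm
    have hmem : j ∈ o.1 i ∩ o.1 (g j) := Finset.mem_inter.2 ⟨hj, hall j⟩
    rw [hd] at hmem
    exact absurd hmem (Finset.notMem_empty j)
  · rintro rfl
    exact hall j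

lemma sum_card_allocOf (g : Fin m → Fin n) : ∑ i, ((allocOf g).1 i).card = m := by
  have h := Finset.card_eq_sum_card_fiberwise (f := g) (s := Finset.univ) (t := Finset.univ)
      (fun x _ => Finset.mem_univ (g x))
  rw [Finset.card_univ, Fintype.card_fin] at h
  exact h.symm

lemma two_terms_le {α : Type*} [Fintype α] (T : α → ℝ) {a b : α} (hab : a ≠ b)
    (h0 : ∀ x, 0 ≤ T x) {c : ℝ} (ha : c ≤ T a) (hb : c ≤ T b) :
    c + c ≤ ∑ x, T x := by
  classical
  have h := Finset.sum_le_sum_of_subset_of_nonneg (Finset.subset_univ ({a, b} : Finset α))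
    (fun x _ _ => h0 x)
  rw [Finset.sum_pair hab] at h
  linarith

end Stmt9Aux

/-- For any `n, m ≥ 2` and `γ ∈ (0,1)`, there is a set of
`n^m − n` additive valuation vectors with singleton values in `{0,1}` such that
for every subset `H` there is a `λ`-auction with revenue `0` outside `H` and
revenue at least `2 − 2γ` on `H`. -/
theorem stmt9 (n m : ℕ) (hn : 2 ≤ n) (hm : 2 ≤ m)
    (γ : ℝ) (hγ : γ ∈ Set.Ioo (0 : ℝ) 1) :
    ∃ vs : Fin (n ^ m - n) → (Fin n → Finset (Fin m) → ℝ),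
      Function.Injective vs ∧
      (∀ ℓ, AdditiveVal (vs ℓ)) ∧
      (∀ ℓ i j, vs ℓ i {j} = 0 ∨ vs ℓ i {j} = 1) ∧
      ∀ H : Set (Fin (n ^ m - n)), ∃ lam : Alloc n m → ℝ,
        ∀ ℓ, ∀ os : Alloc n m, IsMaxAlloc (fun _ => 1) lam (vs ℓ) os →
          (ℓ ∈ H → 2 - 2 * γ ≤ amaRev (fun _ => 1) lam (vs ℓ) os) ∧
          (ℓ ∉ H → amaRev (fun _ => 1) lam (vs ℓ) os = 0) := by
  classical
  obtain ⟨hγ0, hγ1⟩ := hγ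
  have hm0 : 0 < m := by omega
  -- cardinality of nonconstant functions
  have hconst : Fintype.card {g : Fin m → Fin n // ∀ j j' : Fin m, g j = g j'} = n := by
    have e2 : {g : Fin m → Fin n // ∀ j j' : Fin m, g j = g j'} ≃ Fin n :=
      { toFun := fun g => g.1 ⟨0, hm0⟩
        invFun := fun c => ⟨fun _ => c, fun _ _ => rfl⟩
        left_inv := fun g => Subtype.ext (funext fun j => g.2 ⟨0, hm0⟩ j)
        right_inv := fun c => rfl }
    rw [Fintype.card_congr e2, Fintype.card_fin]
  have hcard : Fintype.card {g : Fin m → Fin n // ¬ ∀ j j' : Fin m, g j = g j'} = n ^ m - n := by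
    rw [Fintype.card_subtype_compl, hconst, Fintype.card_fun, Fintype.card_fin, Fintype.card_fin]
  obtain ⟨e⟩ : Nonempty (Fin (n ^ m - n) ≃ {g : Fin m → Fin n // ¬ ∀ j j' : Fin m, g j = g j'}) :=
    ⟨Fintype.equivOfCardEq (by rw [Fintype.card_fin, hcard])⟩
  have valsingle : ∀ (g : Fin m → Fin n) (i : Fin n) (j : Fin m),
      Stmt9Aux.valOf g i {j} = if g j = i then 1 else 0 := fun g i j =>
    Finset.sum_singleton _ _
  refine ⟨fun ℓ => Stmt9Aux.valOf (e ℓ).1, ?_, ?_, ?_, ?_⟩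
  · -- injectivity
    intro ℓ ℓ' hval
    apply e.injective
    apply Subtype.ext
    funext j
    have h1 := congrFun (congrFun hval ((e ℓ).1 j)) {j}
    simp only [valsingle, eq_self_iff_true, if_true] at h1
    by_cases hne : (e ℓ').1 j = (e ℓ).1 j
    · exact hne.symm
    · rw [if_neg hne] at h1
      norm_num at h1
  · -- additivity
    intro ℓ i b
    exact Finset.sum_congr rfl fun j _ => (Finset.sum_singleton _ _).symm
  · -- 0/1 values
    intro ℓ i j
    simp only [valsingle]
    by_cases h : (e ℓ).1 j = i
    · right; rw [if_pos h]
    · left; rw [if_neg h]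
  · -- main part
    intro H
    refine ⟨fun o => if ∃ ℓ' ∈ H, o = Stmt9Aux.allocOf (e ℓ').1 then γ - 1 else 0, ?_⟩
    set lam : Alloc n m → ℝ :=
      fun o => if ∃ ℓ' ∈ H, o = Stmt9Aux.allocOf (e ℓ').1 then γ - 1 else 0 with hlamdef
    intro ℓ os hos
    obtain ⟨g, hgdef⟩ : ∃ g : Fin m → Fin n, ((e ℓ).1 : Fin m → Fin n) = g := ⟨_, rfl⟩
    have lam_le : ∀ o, lam o ≤ 0 := by
      intro o
      simp only [hlamdef]
      split_ifs <;> linarith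
    have lam_ge : ∀ o, γ - 1 ≤ lam o := by
      intro o
      simp only [hlamdef]
      split_ifs <;> linarith
    have lam_mem : ℓ ∈ H → lam (Stmt9Aux.allocOf g) = γ - 1 := by
      intro hH
      simp only [hlamdef]
      exact if_pos ⟨ℓ, hH, by rw [hgdef]⟩
    have lam_not : ℓ ∉ H → lam (Stmt9Aux.allocOf g) = 0 := by
      intro hH
      simp only [hlamdef]
      refine if_neg ?_
      rintro ⟨ℓ', hℓ', heq⟩
      have hgg : g = (e ℓ').1 := Stmt9Aux.allocOf_injective heq
      have hee : ℓ = ℓ' := e.injective (Subtype.ext (hgdef.trans hgg))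
      exact hH (hee ▸ hℓ')
    have hos' : ∀ o : Alloc n m,
        (∑ j, Stmt9Aux.valOf g j (o.1 j)) + lam o
          ≤ (∑ j, Stmt9Aux.valOf g j (os.1 j)) + lam os := by
      intro o
      have h := hos o
      simpa only [one_mul, hgdef] using h
    -- the chosen allocation must be `allocOf g`
    have hosg : os = Stmt9Aux.allocOf g := by
      have h0 := hos' (Stmt9Aux.allocOf g)
      apply Stmt9Aux.rigidity
      have hfull : ∑ l, Stmt9Aux.valOf g l ((Stmt9Aux.allocOf g).1 l) = (m : ℝ) :=
        Stmt9Aux.welfare_allocOf_full g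
      have h1 := lam_ge (Stmt9Aux.allocOf g)
      have h2 := lam_le os
      rw [hfull] at h0
      linarith
    subst hosg
    have hrev : amaRev (fun _ => 1) lam ((fun ℓ => Stmt9Aux.valOf (e ℓ).1) ℓ)
        (Stmt9Aux.allocOf g)
        = ∑ k : Fin n, (allocMax (fun o : Alloc n m =>
              (∑ l ∈ Finset.univ.erase k, Stmt9Aux.valOf g l (o.1 l)) + lam o)
            - ((∑ l ∈ Finset.univ.erase k,
                Stmt9Aux.valOf g l ((Stmt9Aux.allocOf g).1 l)) + lam (Stmt9Aux.allocOf g))) := by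
      simp only [amaRev, inv_one, one_mul, hgdef]
    rw [hrev]
    constructor
    · -- ℓ ∈ H
      intro hH
      obtain ⟨j₀, j₁, hne⟩ : ∃ j₀ j₁ : Fin m, g j₀ ≠ g j₁ := by
        have h2 := (e ℓ).2
        rw [hgdef] at h2
        push_neg at h2
        exact h2
      have key : ∀ k : Fin n, (∃ jw : Fin m, g jw = k) →
          1 - γ ≤ allocMax (fun o : Alloc n m =>
              (∑ l ∈ Finset.univ.erase k, Stmt9Aux.valOf g l (o.1 l)) + lam o)
            - ((∑ l ∈ Finset.univ.erase k,
                Stmt9Aux.valOf g l ((Stmt9Aux.allocOf g).1 l)) + lam (Stmt9Aux.allocOf g)) := by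
        intro k hk
        obtain ⟨jw, hjw⟩ := hk
        -- witness allocation: withhold bidder k's items
        obtain ⟨wk, hwk⟩ : ∃ wk : Alloc n m,
            wk.1 = fun i => if i = k then ∅ else (Stmt9Aux.allocOf g).1 i :=
          ⟨⟨fun i => if i = k then ∅ else (Stmt9Aux.allocOf g).1 i, by
            intro i j hij
            by_cases h1 : i = k
            · simp [h1]
            · by_cases h2 : j = k
              · simp [h2]
              · simp only [if_neg h1, if_neg h2]
                exact (Stmt9Aux.allocOf g).2 i j hij⟩, rfl⟩
        have hwkcard : ∑ i, (wk.1 i).card < m := by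
          have hlt : ∑ i, (wk.1 i).card < ∑ i, ((Stmt9Aux.allocOf g).1 i).card := by
            apply Finset.sum_lt_sum
            · intro i _
              simp only [hwk]
              split_ifs with h
              · simp
              · exact le_rfl
            · refine ⟨k, Finset.mem_univ k, ?_⟩
              simp only [hwk, if_true]
              have hmem : jw ∈ (Stmt9Aux.allocOf g).1 k := (Stmt9Aux.mem_allocOf g k jw).2 hjw
              simpa using Finset.card_pos.2 ⟨jw, hmem⟩
          rw [Stmt9Aux.sum_card_allocOf g] at hlt
          exact hlt
        have hlamw : lam wk = 0 := by
          simp only [hlamdef]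
          refine if_neg ?_
          rintro ⟨ℓ', _, heq⟩
          have hc : ∑ i, (wk.1 i).card = m := by
            rw [heq]
            exact Stmt9Aux.sum_card_allocOf _
          exact (Nat.ne_of_lt hwkcard) hc
        have hwelw : ∑ l ∈ Finset.univ.erase k, Stmt9Aux.valOf g l (wk.1 l)
            = ((Finset.univ.filter fun j => g j ≠ k).card : ℝ) := by
          rw [← Stmt9Aux.welfare_allocOf_erase g k]
          refine Finset.sum_congr rfl fun l hl => ?_
          congr 1
          simp only [hwk]
          rw [if_neg (Finset.mem_erase.1 hl).1]
        have hmax : ((Finset.univ.filter fun j => g j ≠ k).card : ℝ)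
            ≤ allocMax (fun o : Alloc n m =>
              (∑ l ∈ Finset.univ.erase k, Stmt9Aux.valOf g l (o.1 l)) + lam o) := by
          have hle := Finset.le_sup' (fun o : Alloc n m =>
              (∑ l ∈ Finset.univ.erase k, Stmt9Aux.valOf g l (o.1 l)) + lam o)
            (Finset.mem_univ wk)
          simp only [hwelw, hlamw, add_zero] at hle
          exact hle
        rw [Stmt9Aux.welfare_allocOf_erase g k, lam_mem hH]
        linarith
      have h0 : ∀ k : Fin n, 0 ≤ allocMax (fun o : Alloc n m =>
              (∑ l ∈ Finset.univ.erase k, Stmt9Aux.valOf g l (o.1 l)) + lam o)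
            - ((∑ l ∈ Finset.univ.erase k,
                Stmt9Aux.valOf g l ((Stmt9Aux.allocOf g).1 l)) + lam (Stmt9Aux.allocOf g)) := by
        intro k
        have hle := Finset.le_sup' (fun o : Alloc n m =>
            (∑ l ∈ Finset.univ.erase k, Stmt9Aux.valOf g l (o.1 l)) + lam o)
          (Finset.mem_univ (Stmt9Aux.allocOf g))
        have hle' : (∑ l ∈ Finset.univ.erase k,
              Stmt9Aux.valOf g l ((Stmt9Aux.allocOf g).1 l)) + lam (Stmt9Aux.allocOf g)
            ≤ allocMax (fun o : Alloc n m =>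
              (∑ l ∈ Finset.univ.erase k, Stmt9Aux.valOf g l (o.1 l)) + lam o) := hle
        linarith
      have hsum := Stmt9Aux.two_terms_le
        (fun k : Fin n => allocMax (fun o : Alloc n m =>
              (∑ l ∈ Finset.univ.erase k, Stmt9Aux.valOf g l (o.1 l)) + lam o)
            - ((∑ l ∈ Finset.univ.erase k,
                Stmt9Aux.valOf g l ((Stmt9Aux.allocOf g).1 l)) + lam (Stmt9Aux.allocOf g)))
        hne h0 (key (g j₀) ⟨j₀, rfl⟩) (key (g j₁) ⟨j₁, rfl⟩)
      calc 2 - 2 * γ = (1 - γ) + (1 - γ) := by ring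
        _ ≤ _ := hsum
    · -- ℓ ∉ H
      intro hH
      apply Finset.sum_eq_zero
      intro k _
      apply sub_eq_zero_of_eq
      apply le_antisymm
      · apply Finset.sup'_le
        intro o _
        rw [Stmt9Aux.welfare_allocOf_erase g k, lam_not hH, add_zero]
        have h1 := Stmt9Aux.welfare_le_erase g k o
        have h2 := lam_le o
        linarith
      · have hle := Finset.le_sup' (fun o : Alloc n m =>
            (∑ l ∈ Finset.univ.erase k, Stmt9Aux.valOf g l (o.1 l)) + lam o)
          (Finset.mem_univ (Stmt9Aux.allocOf g))
        exact hle
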